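/- arXiv:1907.01816 — 2 statements merged into one kernel-verified Lean document; each statement's English description precedes it below -/
import Mathlib

section
/- Let α, β be complex numbers with 0 < |α| < 1 and 0 < |β| < 1, α ≠ β, and let M = diag(α, β) ∈ GL₂(ℂ). Then the normalizer in GL₂(ℂ) of the cyclic subgroup generated by M equals the centralizer of M in GL₂(ℂ). -/
/-- For `M = diag(α, β)` with `0 < |α| < 1`, `0 < |β| < 1`, `α ≠ β`, the normalizer in
`GL₂(ℂ)` of the cyclic subgroup generated by `M` equals the centralizer of `M`. -/
theorem stmt_2 (α β : ℂ) (hα0 : 0 < ‖α‖) (hα1 : ‖α‖ < 1)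
    (hβ0 : 0 < ‖β‖) (hβ1 : ‖β‖ < 1) (hαβ : α ≠ β)
    (M : GL (Fin 2) ℂ)
    (hM : (M : Matrix (Fin 2) (Fin 2) ℂ) = !![α, 0; 0, β]) :
    Subgroup.normalizer ((Subgroup.zpowers M : Subgroup (GL (Fin 2) ℂ)) : Set (GL (Fin 2) ℂ)) = Subgroup.centralizer {M} := by
  apply le_antisymm
  · -- normalizer ≤ centralizer
    intro R hR
    have hc : R * M * R⁻¹ ∈ Subgroup.zpowers M :=
      (Subgroup.mem_normalizer_iff.mp hR M).mp (Subgroup.mem_zpowers M)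
    obtain ⟨k, hk⟩ := hc
    -- take determinants
    have d := congrArg (Units.map (Matrix.detMonoidHom : Matrix (Fin 2) (Fin 2) ℂ →* ℂ)) hk
    set u : ℂˣ := Units.map (Matrix.detMonoidHom : Matrix (Fin 2) (Fin 2) ℂ →* ℂ) M with hu
    simp only [map_zpow, map_mul, map_inv] at d
    rw [mul_comm _ u, mul_assoc, mul_inv_cancel, mul_one] at d
    -- d : u ^ k = u
    have dval : ((u : ℂ)) ^ k = (u : ℂ) := by
      rw [← Units.val_zpow_eq_zpow_val, d]
    have habs : ‖(u : ℂ)‖ ^ k = ‖(u : ℂ)‖ := by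
      rw [← norm_zpow, dval]
    have huval : (u : ℂ) = α * β := by
      simp [hu, Matrix.detMonoidHom, hM, Matrix.det_fin_two_of]
    have hx0 : 0 < ‖(u : ℂ)‖ := by
      rw [huval, norm_mul]; exact mul_pos hα0 hβ0
    have hx1 : ‖(u : ℂ)‖ < 1 := by
      rw [huval, norm_mul]
      calc ‖α‖ * ‖β‖ < 1 * 1 :=
            mul_lt_mul_of_nonneg hα1 hβ1 hα0.le hβ0.le
        _ = 1 := one_mul 1
    have hk1 : k = 1 := by
      have := zpow_right_injective₀ hx0 (ne_of_lt hx1)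
      have : k = (1 : ℤ) := this (by simpa using habs)
      exact this
    simp only [hk1, zpow_one] at hk
    rw [Subgroup.mem_centralizer_singleton_iff]
    have : R * M = M * R := by
      rw [← mul_inv_eq_iff_eq_mul]
      exact hk.symm
    exact this.symm ▸ this.symm
  · -- centralizer ≤ normalizer
    intro R hR
    have hcomm : Commute R M := (Subgroup.mem_centralizer_singleton_iff.mp hR)
    rw [Subgroup.mem_normalizer_iff]
    intro n
    constructor
    · rintro ⟨k, rfl⟩
      refine ⟨k, ?_⟩
      show M ^ k = R * M ^ k * R⁻¹
      rw [(hcomm.zpow_right k).eq, mul_assoc, mul_inv_cancel, mul_one]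
    · rintro ⟨k, hk⟩
      simp only at hk
      have h1 : R * n = M ^ k * R := by
        have := congrArg (· * R) hk
        simpa [mul_assoc] using this.symm
      rw [← (hcomm.zpow_right k).eq] at h1
      exact ⟨k, (mul_left_cancel h1).symm⟩
end

section
/- Let C = ℂ/Λ be an elliptic curve and let G be a nontrivial finite subgroup of the automorphism group of C (as a group with a fixed origin action extended by translations) whose action on C is not free, i.e., some nontrivial element of G has a fixed point. Then the normalizer of G in Aut(C) is finite, where Aut(C) sits in an exact sequence 1 → C → Aut(C) → ℤ/nℤ → 1 with n ≤ 6. -/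
/-- The action of the automorphism group `Aut(C) = C ⋊ ℤ/n` of an elliptic curve `C` on `C`:
the element `(a, σ)` sends `x` to `a + σ(x)`. -/
def ellipticAut.act {A : Type*} [AddCommGroup A] {H : Type*} [Group H]
    (φ : H →* MulAut (Multiplicative A)) (g : Multiplicative A ⋊[φ] H) (x : A) : A :=
  (g.left).toAdd + (φ g.right (Multiplicative.ofAdd x)).toAdd

/-- Let `C = ℂ/Λ` be an elliptic curve, with automorphism group modeled as the semidirect
product of `C` (translations) by `ℤ/nℤ`, `n ≤ 6`, acting by multiplication by roots of
unity. If `G` is a nontrivial finite subgroup whose action on `C` is not free, then the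
normalizer of `G` in `Aut(C)` is finite. -/
theorem stmt_14 (ω₁ ω₂ : ℂ) (hindep : LinearIndependent ℝ ![ω₁, ω₂])
    (Λ : AddSubgroup ℂ) (hΛ : Λ = AddSubgroup.closure {ω₁, ω₂})
    (n : ℕ) (hn : 0 < n) (hn6 : n ≤ 6)
    (φ : Multiplicative (ZMod n) →* MulAut (Multiplicative (ℂ ⧸ Λ)))
    (ρ : ZMod n → ℂ) (hρroot : ∀ j, ρ j ^ n = 1)
    (hρact : ∀ (j : ZMod n) (z : ℂ),
      φ (Multiplicative.ofAdd j) (Multiplicative.ofAdd ((z : ℂ ⧸ Λ)))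
        = Multiplicative.ofAdd ((ρ j * z : ℂ) : ℂ ⧸ Λ))
    (hρfaithful : ∀ j : ZMod n, j ≠ 0 → ρ j ≠ 1)
    (G : Subgroup (Multiplicative (ℂ ⧸ Λ) ⋊[φ] Multiplicative (ZMod n)))
    (hGfin : Finite G) (hGnontriv : G ≠ ⊥)
    (hnotfree : ∃ g ∈ G, g ≠ 1 ∧ ∃ x : ℂ ⧸ Λ, ellipticAut.act φ g x = x) :
    Finite (Subgroup.normalizer (G : Set (Multiplicative (ℂ ⧸ Λ) ⋊[φ] Multiplicative (ZMod n)))) := by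
  haveI : NeZero n := ⟨hn.ne'⟩
  obtain ⟨g, hgG, hg1, x, hgx⟩ := hnotfree
  have hω₁Λ : ω₁ ∈ Λ := by rw [hΛ]; exact AddSubgroup.subset_closure (by simp)
  have hω₂Λ : ω₂ ∈ Λ := by rw [hΛ]; exact AddSubgroup.subset_closure (by simp)
  set j : ZMod n := Multiplicative.toAdd g.right with hj
  have hσ : Multiplicative.ofAdd j = g.right := ofAdd_toAdd g.right
  -- the rotation part of `g` is nontrivial
  have hjne : j ≠ 0 := by
    intro h0
    apply hg1
    have hr : g.right = 1 := by rw [← hσ, h0, ofAdd_zero]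
    have hact : ellipticAut.act φ g x = Multiplicative.toAdd g.left + x := by
      simp [ellipticAut.act, hr]
    rw [hact] at hgx
    have hl : Multiplicative.toAdd g.left = 0 := by
      have := add_right_cancel (b := x) (hgx.trans (zero_add x).symm)
      simpa using this
    have hl' : g.left = 1 := by
      have := congrArg Multiplicative.ofAdd hl
      simpa using this
    exact SemidirectProduct.ext hl' hr
  -- multiplication by ρ j preserves Λ
  have hρΛ : ∀ z : ℂ, z ∈ Λ → ρ j * z ∈ Λ := by
    intro z hz
    have h1 : ((z : ℂ ⧸ Λ)) = 0 := (QuotientAddGroup.eq_zero_iff z).mpr hz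
    have h2 := hρact j z
    rw [h1, ofAdd_zero, map_one] at h2
    have h3 : ((ρ j * z : ℂ) : ℂ ⧸ Λ) = 0 := by
      have := congrArg Multiplicative.toAdd h2
      simpa using this.symm
    exact (QuotientAddGroup.eq_zero_iff _).mp h3
  set μ : ℂ := 1 - ρ j with hμdef
  have hμ : μ ≠ 0 := sub_ne_zero.mpr (hρfaithful j hjne).symm
  have hμω : ∀ w : ℂ, w ∈ Λ → μ * w ∈ Λ := by
    intro w hw
    rw [hμdef, sub_mul, one_mul]
    exact sub_mem hw (hρΛ w hw)
  -- the rational span of the periods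
  set V : Submodule ℚ ℂ := Submodule.span ℚ ({ω₁, ω₂} : Set ℂ) with hV
  have hΛV : ∀ w ∈ Λ, w ∈ V := by
    intro w hw
    rw [hΛ, AddSubgroup.mem_closure_pair] at hw
    obtain ⟨m, k, rfl⟩ := hw
    exact add_mem (zsmul_mem (Submodule.subset_span (by simp)) m)
      (zsmul_mem (Submodule.subset_span (by simp)) k)
  have hmulV : ∀ w ∈ V, (LinearMap.mulLeft ℚ μ) w ∈ V := by
    intro w hw
    rw [hV, Submodule.mem_span_pair] at hw
    obtain ⟨a, b, rfl⟩ := hw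
    have h1 : (LinearMap.mulLeft ℚ μ) (a • ω₁ + b • ω₂) = a • (μ * ω₁) + b • (μ * ω₂) := by
      simp only [LinearMap.mulLeft_apply, Rat.smul_def]
      ring
    rw [h1]
    exact add_mem (Submodule.smul_mem _ _ (hΛV _ (hμω _ hω₁Λ)))
      (Submodule.smul_mem _ _ (hΛV _ (hμω _ hω₂Λ)))
  haveI : FiniteDimensional ℚ V := FiniteDimensional.span_of_finite ℚ (Set.toFinite _)
  have hinvV : ∀ w ∈ V, μ⁻¹ * w ∈ V := by
    set L : V →ₗ[ℚ] V := (LinearMap.mulLeft ℚ μ).restrict hmulV with hL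
    have hinj : Function.Injective L := by
      intro u v huv
      have h2 : μ * (u : ℂ) = μ * (v : ℂ) := by
        have := congrArg Subtype.val huv
        simpa [hL, LinearMap.restrict_apply] using this
      exact Subtype.ext (mul_left_cancel₀ hμ h2)
    intro w hw
    obtain ⟨u, hu⟩ := LinearMap.surjective_of_injective hinj ⟨w, hw⟩
    have h3 : μ * (u : ℂ) = w := by
      have := congrArg Subtype.val hu
      simpa [hL, LinearMap.restrict_apply] using this
    have h4 : (u : ℂ) = μ⁻¹ * w := by
      rw [← h3, ← mul_assoc, inv_mul_cancel₀ hμ, one_mul]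
    exact h4 ▸ u.2
  -- elements of V are torsion modulo Λ
  have hden : ∀ q : ℚ, (q.den : ℚ) * q = (q.num : ℚ) := by
    intro q
    rw [mul_comm]
    exact_mod_cast Rat.mul_den_eq_num q
  have htors : ∀ w ∈ V, ∃ N : ℕ, 0 < N ∧ ∃ m k : ℤ, (N : ℂ) * w = m • ω₁ + k • ω₂ := by
    intro w hw
    rw [hV, Submodule.mem_span_pair] at hw
    obtain ⟨a, b, rfl⟩ := hw
    refine ⟨a.den * b.den, by positivity, a.num * b.den, b.num * a.den, ?_⟩
    have k1 := congrArg (fun q : ℚ => (q : ℂ)) (hden a)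
    have k2 := congrArg (fun q : ℚ => (q : ℂ)) (hden b)
    push_cast at k1 k2
    rw [zsmul_eq_mul, zsmul_eq_mul, Rat.smul_def, Rat.smul_def]
    push_cast
    linear_combination (ω₁ * (b.den : ℂ)) * k1 + (ω₂ * (a.den : ℂ)) * k2
  -- the additive endomorphism x ↦ x - σ(x)
  set ψ : (ℂ ⧸ Λ) →+ (ℂ ⧸ Λ) := AddMonoidHom.mk'
    (fun y => y - Multiplicative.toAdd (φ g.right (Multiplicative.ofAdd y)))
    (by
      intro a b
      simp only [ofAdd_add, map_mul, toAdd_mul]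
      abel) with hψdef
  have hψ : ∀ y, ψ y = y - Multiplicative.toAdd (φ g.right (Multiplicative.ofAdd y)) :=
    fun y => rfl
  -- kernel elements come from μ⁻¹ Λ
  have hker : ∀ y : ℂ ⧸ Λ, ψ y = 0 → ∃ z : ℂ, (z : ℂ ⧸ Λ) = y ∧ μ * z ∈ Λ := by
    intro y hy
    obtain ⟨z, rfl⟩ := QuotientAddGroup.mk_surjective y
    refine ⟨z, rfl, ?_⟩
    rw [hψ] at hy
    have h2 : Multiplicative.toAdd (φ g.right (Multiplicative.ofAdd ((z : ℂ ⧸ Λ))))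
        = ((ρ j * z : ℂ) : ℂ ⧸ Λ) := by
      rw [← hσ, hρact j z, toAdd_ofAdd]
    have h3 : ((z - ρ j * z : ℂ) : ℂ ⧸ Λ) = 0 := by
      rw [QuotientAddGroup.mk_sub]
      rw [h2] at hy
      exact hy
    have h4 : z - ρ j * z ∈ Λ := (QuotientAddGroup.eq_zero_iff _).mp h3
    have h5 : μ * z = z - ρ j * z := by rw [hμdef]; ring
    rwa [h5]
  -- torsion points x₁, x₂ generating the kernel
  obtain ⟨N₁, hN₁, m₁, k₁, hNω₁⟩ := htors (μ⁻¹ * ω₁) (hinvV _ (hΛV _ hω₁Λ))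
  obtain ⟨N₂, hN₂, m₂, k₂, hNω₂⟩ := htors (μ⁻¹ * ω₂) (hinvV _ (hΛV _ hω₂Λ))
  set x₁ : ℂ ⧸ Λ := ((μ⁻¹ * ω₁ : ℂ) : ℂ ⧸ Λ) with hx₁def
  set x₂ : ℂ ⧸ Λ := ((μ⁻¹ * ω₂ : ℂ) : ℂ ⧸ Λ) with hx₂def
  have hNmem : ∀ (N : ℕ) (m k : ℤ) (w : ℂ), (N : ℂ) * w = m • ω₁ + k • ω₂ →
      (N : ℤ) • ((w : ℂ ⧸ Λ)) = 0 := by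
    intro N m k w hw
    have h1 : ((N : ℤ) • w : ℂ) ∈ Λ := by
      have : ((N : ℤ) • w : ℂ) = (N : ℂ) * w := by
        rw [zsmul_eq_mul]; push_cast; ring
      rw [this, hw]
      exact add_mem (zsmul_mem hω₁Λ m) (zsmul_mem hω₂Λ k)
    have h2 : (((N : ℤ) • w : ℂ) : ℂ ⧸ Λ) = 0 := (QuotientAddGroup.eq_zero_iff _).mpr h1
    rwa [QuotientAddGroup.mk_zsmul] at h2
  have hx₁ : (N₁ : ℤ) • x₁ = 0 := hNmem N₁ m₁ k₁ _ hNω₁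
  have hx₂ : (N₂ : ℤ) • x₂ = 0 := hNmem N₂ m₂ k₂ _ hNω₂
  -- reduction of exponents mod N
  have hredN : ∀ (N : ℕ), 0 < N → ∀ (y : ℂ ⧸ Λ), (N : ℤ) • y = 0 →
      ∀ m : ℤ, ∃ r : Fin N, m • y = (r.val : ℤ) • y := by
    intro N hN y hy m
    have hNz : (0 : ℤ) < N := by exact_mod_cast hN
    have h2 : 0 ≤ m % (N : ℤ) := Int.emod_nonneg m hNz.ne'
    have h1 : m % (N : ℤ) < N := Int.emod_lt_of_pos m hNz
    refine ⟨⟨(m % (N : ℤ)).toNat, by omega⟩, ?_⟩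
    have h3 : ((m % (N : ℤ)).toNat : ℤ) = m % (N : ℤ) := Int.toNat_of_nonneg h2
    conv_lhs => rw [← Int.emod_add_mul_ediv m (N : ℤ)]
    rw [add_zsmul, mul_comm, mul_zsmul, hy, smul_zero, add_zero, h3]
  -- kernel of ψ is finite
  have hK0 : {y : ℂ ⧸ Λ | ψ y = 0}.Finite := by
    refine (Set.finite_range (fun p : Fin N₁ × Fin N₂ =>
      (p.1.val : ℤ) • x₁ + (p.2.val : ℤ) • x₂)).subset ?_
    intro y hy
    obtain ⟨z, rfl, hzΛ⟩ := hker y hy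
    rw [hΛ, AddSubgroup.mem_closure_pair] at hzΛ
    obtain ⟨m, k, hmk⟩ := hzΛ
    have hz : z = (m : ℤ) • (μ⁻¹ * ω₁) + (k : ℤ) • (μ⁻¹ * ω₂) := by
      rw [zsmul_eq_mul, zsmul_eq_mul] at hmk ⊢
      have hz2 : z = μ⁻¹ * (μ * z) := by field_simp
      rw [hz2, ← hmk]
      ring
    have hy2 : ((z : ℂ ⧸ Λ)) = m • x₁ + k • x₂ := by
      rw [hz, QuotientAddGroup.mk_add, QuotientAddGroup.mk_zsmul, QuotientAddGroup.mk_zsmul]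
    obtain ⟨r₁, hr₁⟩ := hredN N₁ hN₁ x₁ hx₁ m
    obtain ⟨r₂, hr₂⟩ := hredN N₂ hN₂ x₂ hx₂ k
    exact ⟨(r₁, r₂), by dsimp only; rw [hy2, hr₁, hr₂]⟩
  -- the finite target set E
  set E : Set (ℂ ⧸ Λ) := Set.range (fun p : (↥G) × Multiplicative (ZMod n) =>
    Multiplicative.toAdd (p.1 : Multiplicative (ℂ ⧸ Λ) ⋊[φ] Multiplicative (ZMod n)).left
      - Multiplicative.toAdd (φ p.2 g.left)) with hEdef
  have hE : E.Finite := Set.finite_range _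
  -- the preimage ψ⁻¹(E) is finite
  have hPfin : (ψ ⁻¹' E).Finite := by
    have hsub : ψ ⁻¹' E ⊆ ⋃ e ∈ E, {y | ψ y = e} := by
      intro y hy
      exact Set.mem_biUnion hy rfl
    refine (Set.Finite.biUnion hE ?_).subset hsub
    intro e _
    by_cases hne : ∃ b₀, ψ b₀ = e
    · obtain ⟨b₀, hb₀⟩ := hne
      have hsub2 : {y | ψ y = e} ⊆ (fun k => b₀ + k) '' {y | ψ y = 0} := by
        intro y hy
        refine ⟨y - b₀, ?_, by dsimp only; abel⟩
        simp only [Set.mem_setOf_eq] at hy ⊢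
        rw [map_sub, hy, hb₀, sub_self]
      exact (hK0.image _).subset hsub2
    · have hemp : {y : ℂ ⧸ Λ | ψ y = e} = ∅ := by
        ext y
        simp only [Set.mem_setOf_eq, Set.mem_empty_iff_false, iff_false]
        exact fun h => hne ⟨y, h⟩
      simp [hemp]
  -- every element of the normalizer has left part in ψ⁻¹(E)
  have hmem : ∀ t : Multiplicative (ℂ ⧸ Λ) ⋊[φ] Multiplicative (ZMod n),
      t ∈ Subgroup.normalizer (G : Set (Multiplicative (ℂ ⧸ Λ) ⋊[φ] Multiplicative (ZMod n))) → Multiplicative.toAdd t.left ∈ ψ ⁻¹' E := by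
    intro t ht
    have hc : t * g * t⁻¹ ∈ G := (Subgroup.mem_normalizer_iff.mp ht g).mp hgG
    refine Set.mem_preimage.mpr ⟨(⟨t * g * t⁻¹, hc⟩, t.right), ?_⟩
    have hcomp : φ (t.right * g.right) ((φ t.right⁻¹) t.left⁻¹) = φ g.right t.left⁻¹ := by
      rw [mul_comm t.right g.right, ← MulAut.mul_apply, ← map_mul, mul_inv_cancel_right]
    show Multiplicative.toAdd (t * g * t⁻¹).left - Multiplicative.toAdd (φ t.right g.left)
        = ψ (Multiplicative.toAdd t.left)
    rw [hψ, ofAdd_toAdd, SemidirectProduct.mul_left, SemidirectProduct.mul_left,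
      SemidirectProduct.mul_right, SemidirectProduct.inv_left, hcomp]
    rw [map_inv, toAdd_mul, toAdd_mul, toAdd_inv]
    abel
  -- conclude: the normalizer embeds into ψ⁻¹(E) × ℤ/n
  haveI : Finite (↥(ψ ⁻¹' E)) := hPfin.to_subtype
  have hinj : Function.Injective (fun t : Subgroup.normalizer (G : Set (Multiplicative (ℂ ⧸ Λ) ⋊[φ] Multiplicative (ZMod n))) =>
      ((⟨Multiplicative.toAdd (t : Multiplicative (ℂ ⧸ Λ) ⋊[φ] Multiplicative (ZMod n)).left,
          hmem t t.2⟩ : ↥(ψ ⁻¹' E)),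
        (t : Multiplicative (ℂ ⧸ Λ) ⋊[φ] Multiplicative (ZMod n)).right)) := by
    intro t₁ t₂ h
    have h1 := congrArg (fun q : (↥(ψ ⁻¹' E)) × Multiplicative (ZMod n) => (q.1 : ℂ ⧸ Λ)) h
    have h2 := congrArg Prod.snd h
    simp only at h1 h2
    apply Subtype.ext
    apply SemidirectProduct.ext
    · exact Multiplicative.toAdd.injective h1
    · exact h2
  exact Finite.of_injective _ hinj
end
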